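/- Let L(u) be a 2×2 matrix of formal series whose entries pairwise satisfy the RTT relation R(u-v) L¹(u) L²(v) = L²(v) L¹(u) R(u-v) with the deformed rational R-matrix R(u) having rows (1-η/u,0,0,0), (-ξ,1,-η/u,0), (ξ,-η/u,1,0), (ξ²,-ξ,ξ,1-η/u). Then the two expressions e₁₁(u)e₂₂(u-η) - e₂₁(u)e₁₂(u-η) - ξ e₁₁(u)e₁₂(u-η) and e₂₂(u)e₁₁(u-η) - e₁₂(u)e₂₁(u-η) + ξ e₁₂(u)e₁₁(u-η) are equal (both equal the quantum determinant qdet L(u)). -/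
import Mathlib


/-- Identification of `Fin 2 × Fin 2` with `Fin 4` in the basis order
`(1⊗1, 1⊗2, 2⊗1, 2⊗2)`. -/
def idx : Fin 2 × Fin 2 → Fin 4 := fun p =>
  ⟨p.1.val * 2 + p.2.val, by have h1 := p.1.isLt; have h2 := p.2.isLt; omega⟩

/-- The deformed rational R-matrix, with scalar entries mapped into the coefficient
algebra `A`. -/
noncomputable def RmatA (A : Type*) [Ring A] [Algebra ℂ A] (η ξ u : ℂ) :
    Matrix (Fin 2 × Fin 2) (Fin 2 × Fin 2) A :=
  Matrix.of fun p q => algebraMap ℂ A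
    ((!![1 - η / u, 0, 0, 0;
         -ξ, 1, -η / u, 0;
         ξ, -η / u, 1, 0;
         ξ ^ 2, -ξ, ξ, 1 - η / u] : Matrix (Fin 4) (Fin 4) ℂ) (idx p) (idx q))

/-- `L¹ = L ⊗ I₂`. -/
def L1 {A : Type*} [Ring A] (M : Matrix (Fin 2) (Fin 2) A) :
    Matrix (Fin 2 × Fin 2) (Fin 2 × Fin 2) A :=
  Matrix.of fun p q => M p.1 q.1 * (if p.2 = q.2 then 1 else 0)

/-- `L² = I₂ ⊗ L`. -/
def L2 {A : Type*} [Ring A] (M : Matrix (Fin 2) (Fin 2) A) :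
    Matrix (Fin 2 × Fin 2) (Fin 2 × Fin 2) A :=
  Matrix.of fun p q => (if p.1 = q.1 then 1 else 0) * M p.2 q.2

/-- If the matrix `L(u) = (e_{ij}(u))` satisfies the RTT relation with the deformed
rational R-matrix, then the two expressions for the quantum determinant agree:
`e₁₁(u)e₂₂(u-η) - e₂₁(u)e₁₂(u-η) - ξ e₁₁(u)e₁₂(u-η)
  = e₂₂(u)e₁₁(u-η) - e₁₂(u)e₂₁(u-η) + ξ e₁₂(u)e₁₁(u-η)`. -/
theorem stmt_13 (A : Type*) [Ring A] [Algebra ℂ A]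
    (η ξ : ℂ) (hη : η ≠ 0)
    (L : ℂ → Matrix (Fin 2) (Fin 2) A)
    (hRTT : ∀ u v : ℂ, u ≠ v →
      RmatA A η ξ (u - v) * L1 (L u) * L2 (L v) =
        L2 (L v) * L1 (L u) * RmatA A η ξ (u - v)) :
    ∀ u : ℂ,
      L u 0 0 * L (u - η) 1 1 - L u 1 0 * L (u - η) 0 1 -
          ξ • (L u 0 0 * L (u - η) 0 1) =
        L u 1 1 * L (u - η) 0 0 - L u 0 1 * L (u - η) 1 0 +
          ξ • (L u 0 1 * L (u - η) 0 0) := by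
  intro u
  have hne : u ≠ u - η := fun h => hη (by linear_combination h)
  have hu : u - (u - η) = η := by ring
  have h := hRTT u (u - η) hne
  rw [hu] at h
  have h1 := congrFun (congrFun h ((0 : Fin 2), (1 : Fin 2))) ((0 : Fin 2), (1 : Fin 2))
  have h2 := congrFun (congrFun h ((0 : Fin 2), (1 : Fin 2))) ((1 : Fin 2), (0 : Fin 2))
  simp only [Matrix.mul_apply, Fintype.sum_prod_type, Fin.sum_univ_two, RmatA, L1, L2,
    Matrix.of_apply, idx] at h1 h2
  norm_num [Fin.mk_zero, Fin.mk_one, Matrix.cons_val', Matrix.cons_val_zero, Matrix.cons_val_one,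
    Matrix.head_cons, Matrix.head_fin_const, Matrix.empty_val', Matrix.cons_val_fin_one,
    neg_div, div_self hη, map_sub, map_neg, map_one, map_zero, map_pow] at h1 h2
  simp only [Algebra.smul_def]
  linear_combination (norm := noncomm_ring) h1 + h2
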